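/- For l ≥ 2 and integers k₁ ≥ 1, k₂,…,k_l ≥ 2: W_{k₁⋯k_{l−1}k_l} = (2^{k_l} − 2) · W_{k₁⋯k_{l−1}}. -/

import Mathlib

open Filter Finset

/-- A letter of the alphabet `{1,2,3}`. -/
abbrev Letter := Fin 3

/-- A word: a finite (possibly empty) sequence of letters. -/
abbrev Word := List Letter

/-- Adjacency of two words: `σ ≠ τ`, and writing `σ = β ++ σ'`, `τ = β ++ τ'` with `β`
the longest common prefix, either one of `σ'`, `τ'` is empty and the other uses at most two
distinct letters, or `σ' = i j^k` and `τ' = j i^{k'}` for distinct letters `i ≠ j`. -/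
def WordAdj (σ τ : Word) : Prop :=
  σ ≠ τ ∧ ∃ β σ' τ' : Word,
    σ = β ++ σ' ∧ τ = β ++ τ' ∧
    ((σ' = [] ∧ τ'.toFinset.card ≤ 2) ∨
     (τ' = [] ∧ σ'.toFinset.card ≤ 2) ∨
     (∃ (i j : Letter) (k k' : ℕ), i ≠ j ∧
        σ' = i :: List.replicate k j ∧ τ' = j :: List.replicate k' i))

/-- The graph `G_t`: vertices are the words of length at most `t` (all other words are
isolated), with adjacency `WordAdj`. -/
def Gt (t : ℕ) : SimpleGraph Word where
  Adj σ τ := σ.length ≤ t ∧ τ.length ≤ t ∧ WordAdj σ τ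
  symm := by
    constructor
    rintro σ τ ⟨h1, h2, hne, β, σ', τ', e1, e2, h3⟩
    refine ⟨h2, h1, hne.symm, β, τ', σ', e2, e1, ?_⟩
    rcases h3 with h | h | ⟨i, j, k, k', hij, hs, ht⟩
    · exact Or.inr (Or.inl h)
    · exact Or.inl h
    · exact Or.inr (Or.inr ⟨j, i, k', k, hij.symm, ht, hs⟩)
  loopless := ⟨fun σ h => h.2.2.1 rfl⟩

/-- `dW t σ τ` is the geodesic distance `d_t(σ,τ)` in the graph `G_t`. -/
noncomputable def dW (t : ℕ) (σ τ : Word) : ℕ := (Gt t).dist σ τ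

/-- Length of the longest suffix of `σ` using at most two distinct letters. -/
def suffLen (σ : Word) : ℕ :=
  Nat.findGreatest (fun m => (σ.drop (σ.length - m)).toFinset.card ≤ 2) σ.length

/-- `fW σ = τ₂` where `σ = τ₂τ₁` and `τ₁` is the longest suffix of `σ` using at most two
distinct letters; `fW [] = []`. -/
def fW (σ : Word) : Word := σ.take (σ.length - suffLen σ)

/-- `ω(σ)`: the least `n ≥ 0` with `f^[n] σ = ∅`. -/
noncomputable def omegaW (σ : Word) : ℕ := sInf {n : ℕ | fW^[n] σ = []}

/-- `L(σ) = d_{|σ|}(σ, ∅) - 1` for nonempty `σ`, and `L(∅) = 0`. -/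
noncomputable def Lw (σ : Word) : ℕ := if σ = [] then 0 else dW σ.length σ [] - 1

/-- `ᾱ_m`: the average of `L` over the `3^m` words of length `m`. -/
noncomputable def alphaBar (m : ℕ) : ℝ :=
  (∑ v : Fin m → Letter, (Lw (List.ofFn v) : ℝ)) / 3 ^ m

/-- `α* = sup_{m ≥ 1} ᾱ_m / m`. -/
noncomputable def alphaStar : ℝ :=
  sSup {x : ℝ | ∃ m : ℕ, 1 ≤ m ∧ x = alphaBar m / m}

/-- `#V_t = (3^{t+1} - 1)/2`, the number of vertices of `G_t`, as a real number. -/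
noncomputable def Nv (t : ℕ) : ℝ := ((3 : ℝ) ^ (t + 1) - 1) / 2

/-- The sum of `d_t(σ,τ)` over all ordered pairs of words `σ, τ ∈ V_t`
(twice the sum over unordered pairs of distinct words). -/
noncomputable def pairSum (t : ℕ) : ℝ :=
  ∑ k ∈ range (t + 1), ∑ l ∈ range (t + 1),
    ∑ v : Fin k → Letter, ∑ w : Fin l → Letter,
      (dW t (List.ofFn v) (List.ofFn w) : ℝ)

/-- The average path length `D̄(t)` of `G_t`. -/
noncomputable def Dbar (t : ℕ) : ℝ := pairSum t / (Nv t * (Nv t - 1))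

/-- `κ_t = (Σ_{σ ∈ V_t} L(σ)) / #V_t`. -/
noncomputable def kappa (t : ℕ) : ℝ :=
  (∑ k ∈ range (t + 1), ∑ v : Fin k → Letter, (Lw (List.ofFn v) : ℝ)) / Nv t

/-- `π_t`: the sum of `d_t(σ,τ)` over unordered pairs of distinct `σ, τ ∈ V_t`. -/
noncomputable def piT (t : ℕ) : ℝ := pairSum t / 2

/-- `μ_t`: the sum of `d_t(σ,τ)` over unordered pairs of distinct `σ, τ ∈ V_t`
having the same first letter. -/
noncomputable def muT (t : ℕ) : ℝ :=
  (∑ i : Letter, ∑ k ∈ range t, ∑ l ∈ range t,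
    ∑ v : Fin k → Letter, ∑ w : Fin l → Letter,
      (dW t (i :: List.ofFn v) (i :: List.ofFn w) : ℝ)) / 2

/-- `λ_t = Σ_{σ ∈ V_t, σ ≠ ∅} d_t(σ, ∅)`. -/
noncomputable def lambdaT (t : ℕ) : ℝ :=
  ∑ k ∈ Finset.Icc 1 t, ∑ v : Fin k → Letter, (dW t (List.ofFn v) [] : ℝ)

/-- `ν_t = Σ_{i<j} Σ_{|σ'|,|τ'| ≤ t-1} d_t(iσ', jτ')`. -/
noncomputable def nuT (t : ℕ) : ℝ :=
  ∑ i : Letter, ∑ j : Letter,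
    if i < j then
      ∑ k ∈ range t, ∑ l ∈ range t,
        ∑ v : Fin k → Letter, ∑ w : Fin l → Letter,
          (dW t (i :: List.ofFn v) (j :: List.ofFn w) : ℝ)
    else 0

/-- `IsNormalDecomp σ τs`: `τs = [τ₁, …, τ_l]` (with `l ≥ 1`) is a normal decomposition
of `σ`: `σ = τ₁⋯τ_l`; `#τ₁ ≤ 2`, `|τ₁| ≥ 1`; `#τ_i = 2`, `|τ_i| ≥ 2` for `i ≥ 2`; and for
`i < l` the last letter of `τ_i` is the unique letter of the alphabet not appearing
in `τ_{i+1}`. -/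
def IsNormalDecomp (σ : Word) (τs : List Word) : Prop :=
  σ = τs.flatten ∧ τs ≠ [] ∧
  (∀ i : Fin τs.length,
    (i.1 = 0 → 1 ≤ (τs.get i).length ∧ (τs.get i).toFinset.card ≤ 2) ∧
    (1 ≤ i.1 → 2 ≤ (τs.get i).length ∧ (τs.get i).toFinset.card = 2)) ∧
  (∀ i : ℕ, ∀ h : i + 1 < τs.length,
    ∃ c : Letter, (τs.get ⟨i, Nat.lt_of_succ_lt h⟩).getLast? = some c ∧
      c ∉ (τs.get ⟨i + 1, h⟩).toFinset ∧
      ∀ c' : Letter, c' ∉ (τs.get ⟨i + 1, h⟩).toFinset → c' = c)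

/-- `W_{k₁⋯k_l}`: the number of words of length `k₁ + ⋯ + k_l` admitting a normal
decomposition into blocks of lengths `k₁, …, k_l`. -/
noncomputable def Wcount (ks : List ℕ) : ℕ :=
  Nat.card {σ : Word // ∃ τs : List Word, IsNormalDecomp σ τs ∧ τs.map List.length = ks}

/-- `Ē(t) = 3^{-t} Σ_{q ≥ 1} Σ_{k₁ ≥ 1, k₂,…,k_q ≥ 2, k₁+⋯+k_q = t} (q-1)·W_{k₁⋯k_q}`. -/
noncomputable def Ebar (t : ℕ) : ℝ :=
  ((∑ c : Composition t,
      if ∀ i ∈ c.blocks.tail, 2 ≤ i then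
        (c.blocks.length - 1) * Wcount c.blocks
      else 0 : ℕ) : ℝ) / 3 ^ t


section AuxWcount

/-- The decomposition predicate underlying `Wcount`. -/
abbrev PDec (ks : List ℕ) (σ : Word) : Prop :=
  ∃ τs : List Word, IsNormalDecomp σ τs ∧ τs.map List.length = ks

lemma missing_unique {s : Finset Letter} (hs : s.card = 2) {c c' : Letter}
    (hc : c ∉ s) (hc' : c' ∉ s) : c' = c := by
  by_contra hne
  have h1 : c ∉ insert c' s := by simp [hc, Ne.symm hne]
  have h4 : (insert c (insert c' s)).card = 4 := by
    rw [Finset.card_insert_of_notMem h1, Finset.card_insert_of_notMem hc', hs]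
  have h5 := Finset.card_le_univ (insert c (insert c' s))
  rw [h4] at h5
  have h6 : Fintype.card Letter = 3 := by simp
  omega

lemma getLast?_eq_getLastD {σ : Word} (h : σ ≠ []) :
    σ.getLast? = some (σ.getLastD 0) := by
  rw [List.getLastD_eq_getLast?, List.getLast?_eq_getLast h]
  rfl

lemma flatten_getLast? {τs : List Word} (h : τs ≠ []) (h2 : τs.getLast h ≠ []) :
    τs.flatten.getLast? = (τs.getLast h).getLast? := by
  conv_lhs => rw [← List.dropLast_append_getLast h]
  rw [List.flatten_append, List.getLast?_append]
  simp only [List.flatten_cons, List.flatten_nil, List.append_nil]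
  rw [getLast?_eq_getLastD h2]
  rfl

lemma card_two_iff {c : Letter} {τ : Word} (hc : c ∉ τ) :
    τ.toFinset.card = 2 ↔ ∃ x ∈ τ, ∃ y ∈ τ, x ≠ y := by
  constructor
  · intro h
    obtain ⟨x, y, hxy, hs⟩ := Finset.card_eq_two.mp h
    refine ⟨x, ?_, y, ?_, hxy⟩
    · rw [← List.mem_toFinset, hs]; simp
    · rw [← List.mem_toFinset, hs]; simp
  · rintro ⟨x, hx, y, hy, hxy⟩
    have hsub : τ.toFinset ⊆ Finset.univ.erase c := by
      intro a ha
      simp only [Finset.mem_erase, Finset.mem_univ, and_true]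
      rintro rfl; exact hc (List.mem_toFinset.mp ha)
    have h2 : τ.toFinset.card ≤ 2 := by
      have := Finset.card_le_card hsub
      simpa using this
    have h1 : ({x, y} : Finset Letter) ⊆ τ.toFinset := by
      intro a ha
      simp only [Finset.mem_insert, Finset.mem_singleton] at ha
      rcases ha with rfl | rfl
      · exact List.mem_toFinset.mpr hx
      · exact List.mem_toFinset.mpr hy
    have h3 := Finset.card_le_card h1
    rw [Finset.card_insert_of_notMem (by simpa using hxy), Finset.card_singleton] at h3
    omega

lemma fiber_card (c : Letter) (kl : ℕ) (hkl : 1 ≤ kl) :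
    Nat.card {τ : Word // τ.length = kl ∧ τ.toFinset.card = 2 ∧ c ∉ τ.toFinset} =
      2 ^ kl - 2 := by
  classical
  have hc_mem : ∀ {τ : Word}, c ∉ τ.toFinset ↔ c ∉ τ := by
    intro τ; rw [List.mem_toFinset]
  let Y := {x : Letter // x ≠ c}
  let E : {τ : Word // τ.length = kl ∧ τ.toFinset.card = 2 ∧ c ∉ τ.toFinset} ≃
      {f : Fin kl → Y // ¬ ∀ i j, f i = f j} :=
    { toFun := fun s =>
        ⟨fun i => ⟨s.1.get ⟨i.1, by rw [s.2.1]; exact i.2⟩, by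
            intro hec
            exact hc_mem.mp s.2.2.2 (List.mem_iff_get.mpr ⟨_, hec⟩)⟩, by
          intro hconst
          have hne : c ∉ s.1 := hc_mem.mp s.2.2.2
          obtain ⟨x, hx, y, hy, hxy⟩ := (card_two_iff hne).mp s.2.2.1
          obtain ⟨ix, hix⟩ := List.mem_iff_get.mp hx
          obtain ⟨iy, hiy⟩ := List.mem_iff_get.mp hy
          have := hconst ⟨ix.1, by have h5 := ix.2; have h6 := s.2.1; omega⟩
            ⟨iy.1, by have h5 := iy.2; have h6 := s.2.1; omega⟩
          apply hxy
          rw [← hix, ← hiy]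
          exact congrArg Subtype.val this⟩,
      invFun := fun f =>
        ⟨List.ofFn (fun i => (f.1 i).1), by
          refine ⟨by simp, ?_, ?_⟩
          · have hne : c ∉ List.ofFn (fun i => (f.1 i).1) := by
              simp only [List.mem_ofFn]
              rintro ⟨i, hi⟩
              exact (f.1 i).2 hi
            rw [card_two_iff hne]
            have : ¬ ∀ i j, f.1 i = f.1 j := f.2
            push_neg at this
            obtain ⟨i, j, hij⟩ := this
            refine ⟨(f.1 i).1, by simp [List.mem_ofFn],
              (f.1 j).1, by simp [List.mem_ofFn], ?_⟩
            intro h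
            exact hij (Subtype.ext h)
          · rw [hc_mem]
            simp only [List.mem_ofFn]
            rintro ⟨i, hi⟩
            exact (f.1 i).2 hi⟩,
      left_inv := fun s => by
        apply Subtype.ext
        apply List.ext_getElem
        · simp [s.2.1]
        · intro i h1 h2
          simp [List.getElem_ofFn]
      right_inv := fun f => by
        apply Subtype.ext
        funext i
        apply Subtype.ext
        simp }
  rw [Nat.card_congr E, Nat.card_eq_fintype_card]
  have hY : Fintype.card Y = 2 := by
    simp [Y, Fintype.card_subtype_compl]
  have hfun : Fintype.card (Fin kl → Y) = 2 ^ kl := by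
    rw [Fintype.card_fun, hY, Fintype.card_fin]
  have hconst : Fintype.card {f : Fin kl → Y // ∀ i j, f i = f j} = 2 := by
    have e2 : {f : Fin kl → Y // ∀ i j, f i = f j} ≃ Y :=
      { toFun := fun f => f.1 ⟨0, hkl⟩
        invFun := fun y => ⟨fun _ => y, fun _ _ => rfl⟩
        left_inv := fun f => Subtype.ext (funext fun i => f.2 _ _)
        right_inv := fun y => rfl }
    rw [Fintype.card_congr e2, hY]
  rw [Fintype.card_subtype_compl, hfun, hconst]

lemma nd_block_len {σ : Word} {τs : List Word} (h : IsNormalDecomp σ τs) :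
    ∀ i : Fin τs.length, 1 ≤ (τs.get i).length := by
  intro i
  rcases Nat.eq_zero_or_pos i.1 with h0 | h1
  · exact ((h.2.2.1 i).1 h0).1
  · exact le_trans (by norm_num) ((h.2.2.1 i).2 h1).1

lemma nd_getLast_ne {σ : Word} {τs : List Word} (h : IsNormalDecomp σ τs)
    (hne : τs ≠ []) : τs.getLast hne ≠ [] := by
  have h1 : 0 < τs.length := List.length_pos_iff.mpr hne
  have h2 := nd_block_len h ⟨τs.length - 1, by omega⟩
  intro he
  rw [List.getLast_eq_getElem] at he
  rw [List.get_eq_getElem] at h2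
  rw [he] at h2
  simp at h2

lemma nd_append_iff (τs : List Word) (τl : Word) (hne : τs ≠ []) :
    IsNormalDecomp (τs.flatten ++ τl) (τs ++ [τl]) ↔
      (IsNormalDecomp τs.flatten τs ∧ 2 ≤ τl.length ∧ τl.toFinset.card = 2 ∧
       ∃ c, τs.flatten.getLast? = some c ∧ c ∉ τl.toFinset) := by
  have hL : 1 ≤ τs.length := List.length_pos_iff.mpr hne
  have hlen : (τs ++ [τl]).length = τs.length + 1 := by simp
  have hget' : ∀ (i : ℕ) (h2 : i < (τs ++ [τl]).length) (hi : i < τs.length),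
      (τs ++ [τl]).get ⟨i, h2⟩ = τs.get ⟨i, hi⟩ := by
    intro i h2 hi
    show (τs ++ [τl])[i]'(by exact h2) = τs[i]'(by exact hi)
    exact List.getElem_append_left hi
  have hval : ∀ (i : ℕ) (h2 : i < (τs ++ [τl]).length), i = τs.length →
      (τs ++ [τl]).get ⟨i, h2⟩ = τl := by
    intro i h2 hi
    subst hi
    show (τs ++ [τl])[τs.length]'(by exact h2) = τl
    exact List.getElem_concat_length rfl _
  constructor
  · rintro ⟨-, -, hblk, hcons⟩
    have hnd1 : IsNormalDecomp τs.flatten τs := by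
      refine ⟨rfl, hne, ?_, ?_⟩
      · intro i
        obtain ⟨iv, hiv⟩ := i
        have h2 := hblk ⟨iv, by rw [hlen]; omega⟩
        rwa [hget' iv (by rw [hlen]; omega) hiv] at h2
      · intro i h
        have h2 := hcons i (by rw [hlen]; omega)
        rwa [hget' i (by rw [hlen]; omega) (by omega),
          hget' (i + 1) (by rw [hlen]; omega) h] at h2
    have hbl := hblk ⟨τs.length, by rw [hlen]; omega⟩
    rw [hval τs.length (by rw [hlen]; omega) rfl] at hbl
    have hτl := hbl.2 hL
    obtain ⟨c, hc1, hc2, -⟩ := hcons (τs.length - 1) (by rw [hlen]; omega)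
    rw [hget' (τs.length - 1) (by rw [hlen]; omega) (by omega)] at hc1
    rw [hval (τs.length - 1 + 1) (by rw [hlen]; omega) (by omega)] at hc2
    refine ⟨hnd1, hτl.1, hτl.2, c, ?_, hc2⟩
    rw [flatten_getLast? hne (nd_getLast_ne hnd1 hne)]
    have hgl : τs.getLast hne = τs.get ⟨τs.length - 1, by omega⟩ := by
      rw [List.getLast_eq_getElem]
      rfl
    rw [hgl]
    exact hc1
  · rintro ⟨hnd, hlen2, hcard2, c, hc1, hc2⟩
    refine ⟨by simp, by simp, ?_, ?_⟩
    · intro i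
      obtain ⟨iv, hiv⟩ := i
      by_cases hi : iv < τs.length
      · rw [hget' iv hiv hi]
        exact hnd.2.2.1 ⟨iv, hi⟩
      · have hi' : iv = τs.length := by
          have h5 := hiv
          rw [hlen] at h5
          omega
        rw [hval iv hiv hi']
        refine ⟨fun h0 => ?_, fun _ => ⟨hlen2, hcard2⟩⟩
        have h0' : iv = 0 := h0
        omega
    · intro i h
      by_cases hi : i + 1 < τs.length
      · have h2 := hnd.2.2.2 i hi
        rwa [hget' i (by omega) (by omega), hget' (i + 1) h hi]
      · have hi' : i + 1 = τs.length := by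
          have h5 := h
          rw [hlen] at h5
          omega
        rw [hget' i (by omega) (by omega), hval (i + 1) h hi']
        refine ⟨c, ?_, hc2, fun c' hcc' => missing_unique hcard2 hc2 hcc'⟩
        have hgl : τs.get ⟨i, by omega⟩ = τs.getLast hne := by
          rw [List.getLast_eq_getElem]
          show τs[i]'(by omega) = τs[τs.length - 1]'(by omega)
          congr 1
          omega
        rw [hgl, ← flatten_getLast? hne (nd_getLast_ne hnd hne)]
        exact hc1

lemma P_split (k₁ : ℕ) (ms : List ℕ) (kl : ℕ) (h1 : 1 ≤ k₁) (h3 : 2 ≤ kl) (σ : Word) :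
    PDec ((k₁ :: ms) ++ [kl]) σ ↔
      σ.length = (k₁ :: ms).sum + kl ∧
      PDec (k₁ :: ms) (σ.take (k₁ :: ms).sum) ∧
      (σ.drop (k₁ :: ms).sum).toFinset.card = 2 ∧
      ∃ c, (σ.take (k₁ :: ms).sum).getLast? = some c ∧
        c ∉ (σ.drop (k₁ :: ms).sum).toFinset := by
  set n := (k₁ :: ms).sum with hn
  constructor
  · rintro ⟨τs, hnd, hlen⟩
    have hτne : τs ≠ [] := hnd.2.1
    set τs' := τs.dropLast with hτs'
    set τl := τs.getLast hτne with hτl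
    have heq : τs' ++ [τl] = τs := List.dropLast_append_getLast hτne
    have hmap : τs'.map List.length ++ [τl.length] = (k₁ :: ms) ++ [kl] := by
      rw [← hlen, ← heq]
      simp
    obtain ⟨hm1, hm2⟩ := List.append_inj' hmap (by simp)
    have hτll : τl.length = kl := by simpa using hm2
    have hσ : σ = τs'.flatten ++ τl := by
      rw [hnd.1, ← heq, List.flatten_append]
      simp
    have hnf : τs'.flatten.length = n := by rw [List.length_flatten, hm1]
    have htake : σ.take n = τs'.flatten := by rw [hσ]; exact List.take_left' hnf
    have hdrop : σ.drop n = τl := by rw [hσ]; exact List.drop_left' hnf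
    have hne' : τs' ≠ [] := by
      intro h
      rw [h] at hm1
      simp at hm1
    have hnd2 : IsNormalDecomp (τs'.flatten ++ τl) (τs' ++ [τl]) := by
      rw [heq, ← hσ]
      exact hnd
    obtain ⟨hA, hB, hC, hD⟩ := (nd_append_iff τs' τl hne').mp hnd2
    refine ⟨by rw [hσ]; simp [hnf, hτll], ⟨τs', by rw [htake]; exact hA, hm1⟩,
      by rw [hdrop]; exact hC, ?_⟩
    rw [htake, hdrop]
    exact hD
  · rintro ⟨hlen, ⟨τs', hnd', hm1⟩, hcard, c, hc1, hc2⟩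
    have hσ' : σ.take n = τs'.flatten := hnd'.1
    have hne' : τs' ≠ [] := hnd'.2.1
    have hnflat : τs'.flatten.length = n := by rw [List.length_flatten, hm1]
    have hdl : (σ.drop n).length = kl := by
      rw [List.length_drop, hlen]
      omega
    have hnd2 : IsNormalDecomp τs'.flatten τs' := by
      rw [← hσ']
      exact hnd'
    have key := (nd_append_iff τs' (σ.drop n) hne').mpr
      ⟨hnd2, by omega, hcard, c, by rw [← hσ']; exact hc1, hc2⟩
    refine ⟨τs' ++ [σ.drop n], ?_, by simp [hm1, hdl]⟩
    have : σ = τs'.flatten ++ σ.drop n := by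
      rw [← hσ', List.take_append_drop]
    rwa [← this] at key

lemma finite_PDec (ks : List ℕ) : Finite {σ : Word // PDec ks σ} := by
  have hlen : ∀ s : {σ : Word // PDec ks σ}, s.1.length = ks.sum := by
    rintro ⟨σ, τs, hnd, hm⟩
    show σ.length = ks.sum
    rw [hnd.1, List.length_flatten, hm]
  haveI : Finite (List.Vector Letter ks.sum) := Finite.of_fintype _
  exact Finite.of_injective (β := List.Vector Letter ks.sum)
    (fun s => ⟨s.1, hlen s⟩)
    (fun a b h => Subtype.ext (congrArg List.Vector.toList h))

lemma finite_fiber (c : Letter) (kl : ℕ) :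
    Finite {τ : Word // τ.length = kl ∧ τ.toFinset.card = 2 ∧ c ∉ τ.toFinset} := by
  haveI : Finite (List.Vector Letter kl) := Finite.of_fintype _
  exact Finite.of_injective (β := List.Vector Letter kl)
    (fun s => ⟨s.1, s.2.1⟩)
    (fun a b h => Subtype.ext (congrArg List.Vector.toList h))

end AuxWcount

/-- For `l ≥ 2`: `W_{k₁⋯k_{l−1}k_l} = (2^{k_l} − 2) · W_{k₁⋯k_{l−1}}`. -/
theorem Wcount_append_last (k₁ : ℕ) (ms : List ℕ) (kl : ℕ)
    (h1 : 1 ≤ k₁) (h2 : ∀ m ∈ ms, 2 ≤ m) (h3 : 2 ≤ kl) :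
    Wcount ((k₁ :: ms) ++ [kl]) = (2 ^ kl - 2) * Wcount (k₁ :: ms) := by
  classical
  set ks := k₁ :: ms with hks
  set n := ks.sum with hn
  have hn1 : 1 ≤ n := by
    rw [hn, hks, List.sum_cons]
    omega
  have hnks : n = (k₁ :: ms).sum := by rw [hn, hks]
  let B := {σ : Word // PDec ks σ}
  let Fib : Letter → Type := fun c =>
    {τ : Word // τ.length = kl ∧ τ.toFinset.card = 2 ∧ c ∉ τ.toFinset}
  let cb : B → Letter := fun b => b.1.getLastD 0
  have hBlen : ∀ b : B, b.1.length = n := by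
    rintro ⟨σ, τs, hnd, hm⟩
    show σ.length = n
    rw [hnd.1, List.length_flatten, hm]
  have hBne : ∀ b : B, b.1 ≠ [] := by
    intro b hb
    have := hBlen b
    rw [hb] at this
    simp at this
    omega
  have hsplit := P_split k₁ ms kl h1 h3
  have hkey : ∀ (b1 b2 : B), b1 = b2 → ∀ (x1 : Fib (cb b1)) (x2 : Fib (cb b2)),
      (x1 : Word) = (x2 : Word) → HEq x1 x2 := by
    rintro b1 b2 rfl x1 x2 hx
    exact heq_of_eq (Subtype.ext hx)
  let E : {σ : Word // PDec (ks ++ [kl]) σ} ≃ Σ b : B, Fib (cb b) :=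
    { toFun := fun s =>
        ⟨⟨s.1.take n, ((hsplit s.1).mp s.2).2.1⟩, ⟨s.1.drop n, by
          obtain ⟨hlen, hP, hcard, c, hc1, hc2⟩ := (hsplit s.1).mp s.2
          refine ⟨by rw [List.length_drop, hlen]; omega, hcard, ?_⟩
          have htne : s.1.take n ≠ [] := by
            intro h
            rw [h] at hc1
            simp at hc1
          have : (s.1.take n).getLastD 0 = c := by
            have h2 := getLast?_eq_getLastD htne
            rw [hc1] at h2
            exact (Option.some_injective _ h2).symm
          show (s.1.take n).getLastD 0 ∉ (s.1.drop n).toFinset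
          rw [this]
          exact hc2⟩⟩
      invFun := fun p =>
        ⟨p.1.1 ++ p.2.1, by
          have ht : (p.1.1 ++ p.2.1).take n = p.1.1 := List.take_left' (hBlen p.1)
          have hd : (p.1.1 ++ p.2.1).drop n = p.2.1 := List.drop_left' (hBlen p.1)
          refine (hsplit _).mpr ⟨by rw [List.length_append, hBlen p.1, p.2.2.1], ?_, ?_, ?_⟩
          · rw [ht]; exact p.1.2
          · rw [hd]; exact p.2.2.2.1
          · refine ⟨cb p.1, ?_, ?_⟩
            · rw [ht]
              exact getLast?_eq_getLastD (hBne p.1)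
            · rw [hd]
              exact p.2.2.2.2⟩
      left_inv := fun s => Subtype.ext (List.take_append_drop n s.1)
      right_inv := fun p => by
        obtain ⟨⟨σ', hb⟩, ⟨τ, hf⟩⟩ := p
        have ht : (σ' ++ τ).take n = σ' := List.take_left' (hBlen ⟨σ', hb⟩)
        have hd : (σ' ++ τ).drop n = τ := List.drop_left' (hBlen ⟨σ', hb⟩)
        exact Sigma.ext (Subtype.ext ht) (hkey _ _ (Subtype.ext ht) _ _ hd) }
  have hWA : Wcount (ks ++ [kl]) = Nat.card (Σ b : B, Fib (cb b)) := Nat.card_congr E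
  haveI : Finite B := finite_PDec ks
  haveI : ∀ c, Finite (Fib c) := fun c => finite_fiber c kl
  letI : Fintype B := Fintype.ofFinite B
  letI : ∀ b : B, Fintype (Fib (cb b)) := fun b => Fintype.ofFinite _
  rw [hWA, Nat.card_eq_fintype_card, Fintype.card_sigma]
  have hfib : ∀ b : B, Fintype.card (Fib (cb b)) = 2 ^ kl - 2 := fun b => by
    rw [← Nat.card_eq_fintype_card]
    exact fiber_card (cb b) kl (by omega)
  rw [Finset.sum_congr rfl (fun b _ => hfib b), Finset.sum_const, smul_eq_mul,
    Finset.card_univ, ← Nat.card_eq_fintype_card]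
  have : Wcount ks = Nat.card B := rfl
  rw [this, Nat.mul_comm]
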